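/- Let V, W be finite-dimensional complex vector spaces, let u : V → W and w : W → V be linear maps such that w ∘ u + Id_V is invertible, let s : V → V be the unique linear map with spectrum contained in Σ₁ such that exp(2πi·s) = w ∘ u + Id_V, and set x := ψ(s)^{−1} ∘ w. Then ψ(x ∘ u) ∘ x = w. -/

import Mathlib

open Complex

noncomputable section

/-- The set Σ: complex numbers `α` with `-1 ≤ Re α ≤ 0`, `Im α ≥ 0` if `Re α = -1`,
and `Im α < 0` if `Re α = 0`. -/
def SigmaSet : Set ℂ :=
  {α : ℂ | -1 ≤ α.re ∧ α.re ≤ 0 ∧ (α.re = -1 → 0 ≤ α.im) ∧ (α.re = 0 → α.im < 0)}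

/-- The set Σ₁ := Σ + 1. -/
def Sigma1 : Set ℂ := {α : ℂ | α - 1 ∈ SigmaSet}

/-- The constant `2πi`. -/
def twoPiI : ℂ := 2 * Real.pi * Complex.I

/-- The exponential `exp(2πi·f)` of an endomorphism `f`. -/
def expEnd {E : Type*} [NormedAddCommGroup E] [NormedSpace ℂ E] (f : E →L[ℂ] E) :
    E →L[ℂ] E :=
  NormedSpace.exp (twoPiI • f)

/-- The power series `ψ(A) := ∑_{k=1}^∞ ((2πi)^k / k!) A^(k-1)`. It satisfies
`A·ψ(A) = ψ(A)·A = exp(2πi·A) − Id`. -/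
def psiEnd {E : Type*} [NormedAddCommGroup E] [NormedSpace ℂ E] (A : E →L[ℂ] E) :
    E →L[ℂ] E :=
  ∑' k : ℕ, ((twoPiI ^ (k + 1) / (Nat.factorial (k + 1) : ℂ)) • A ^ k)

namespace PsiProofAux

/-- The coefficients of the exponential series. -/
def c (k : ℕ) : ℂ := twoPiI ^ k / (Nat.factorial k : ℂ)

lemma norm_twoPiI : ‖twoPiI‖ = 2 * Real.pi := by
  simp [twoPiI, map_mul,
    abs_of_pos Real.pi_pos]

lemma norm_c (k : ℕ) : ‖c k‖ = (2 * Real.pi) ^ k / (Nat.factorial k : ℝ) := by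
  rw [c, norm_div, norm_pow, norm_twoPiI, Complex.norm_natCast]

lemma twoPiI_ne_zero : twoPiI ≠ 0 := by
  simp [twoPiI, Real.pi_ne_zero, Complex.I_ne_zero]

section Algebra

variable {𝔸 : Type*} [NormedRing 𝔸] [NormedAlgebra ℂ 𝔸] [NormOneClass 𝔸] [CompleteSpace 𝔸]

lemma summable_full (a : 𝔸) : Summable (fun n : ℕ => c n • a ^ n) := by
  refine Summable.of_norm ?_
  refine Summable.of_nonneg_of_le (fun k => norm_nonneg _) (fun n => ?_)
    (Real.summable_pow_div_factorial (2 * Real.pi * ‖a‖))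
  calc ‖c n • a ^ n‖ ≤ ‖c n‖ * ‖a ^ n‖ := norm_smul_le _ _
    _ ≤ (2 * Real.pi) ^ n / (Nat.factorial n : ℝ) * ‖a‖ ^ n := by
        rw [norm_c]
        gcongr
        exact norm_pow_le a n
    _ = (2 * Real.pi * ‖a‖) ^ n / (Nat.factorial n : ℝ) := by
        rw [mul_pow]; ring

lemma summable_shift (a : 𝔸) : Summable (fun k : ℕ => c (k + 1) • a ^ k) := by
  refine Summable.of_norm ?_
  refine Summable.of_nonneg_of_le (fun k => norm_nonneg _) (fun k => ?_)
    ((Real.summable_pow_div_factorial (2 * Real.pi * ‖a‖)).mul_left (2 * Real.pi))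
  have hfac : (Nat.factorial k : ℝ) ≤ (Nat.factorial (k + 1) : ℝ) := by
    exact_mod_cast Nat.factorial_le (Nat.le_succ k)
  have hfac0 : (0 : ℝ) < (Nat.factorial k : ℝ) := by
    exact_mod_cast Nat.factorial_pos k
  calc ‖c (k + 1) • a ^ k‖ ≤ ‖c (k + 1)‖ * ‖a ^ k‖ := norm_smul_le _ _
    _ ≤ (2 * Real.pi) ^ (k + 1) / (Nat.factorial (k + 1) : ℝ) * ‖a‖ ^ k := by
        rw [norm_c]
        gcongr
        exact norm_pow_le a k
    _ = 2 * Real.pi * ((2 * Real.pi) ^ k * ‖a‖ ^ k) / (Nat.factorial (k + 1) : ℝ) := by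
        rw [pow_succ]; ring
    _ ≤ 2 * Real.pi * ((2 * Real.pi) ^ k * ‖a‖ ^ k) / (Nat.factorial k : ℝ) := by
        gcongr
    _ = 2 * Real.pi * ((2 * Real.pi * ‖a‖) ^ k / (Nat.factorial k : ℝ)) := by
        rw [mul_pow]; ring

lemma exp_twoPiI_smul (a : 𝔸) :
    NormedSpace.exp (twoPiI • a) = ∑' n : ℕ, c n • a ^ n := by
  rw [NormedSpace.exp_eq_tsum (𝕂 := ℂ)]
  refine tsum_congr fun n => ?_
  rw [smul_pow, smul_smul, c, div_eq_mul_inv, mul_comm]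

lemma psi_mul (a : 𝔸) :
    (∑' k : ℕ, c (k + 1) • a ^ k) * a = NormedSpace.exp (twoPiI • a) - 1 := by
  have h1 : (∑' k : ℕ, c (k + 1) • a ^ k) * a = ∑' k : ℕ, c (k + 1) • a ^ (k + 1) := by
    rw [← Summable.tsum_mul_right a (summable_shift a)]
    exact tsum_congr fun k => by rw [smul_mul_assoc, pow_succ]
  have h2 : ∑' n : ℕ, c n • a ^ n = c 0 • a ^ 0 + ∑' k : ℕ, c (k + 1) • a ^ (k + 1) :=
    Summable.tsum_eq_zero_add (summable_full a)
  have h3 : c 0 • (a ^ 0 : 𝔸) = 1 := by simp [c]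
  rw [h1, exp_twoPiI_smul, h2, h3]
  abel

lemma mul_psi (a : 𝔸) :
    a * (∑' k : ℕ, c (k + 1) • a ^ k) = (∑' k : ℕ, c (k + 1) • a ^ k) * a := by
  have h1 : (∑' k : ℕ, c (k + 1) • a ^ k) * a = ∑' k : ℕ, c (k + 1) • a ^ (k + 1) := by
    rw [← Summable.tsum_mul_right a (summable_shift a)]
    exact tsum_congr fun k => by rw [smul_mul_assoc, pow_succ]
  have h2 : a * (∑' k : ℕ, c (k + 1) • a ^ k) = ∑' k : ℕ, c (k + 1) • a ^ (k + 1) := by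
    have := ContinuousLinearMap.map_tsum (ContinuousLinearMap.mul ℂ 𝔸 a) (summable_shift a)
    simp only [ContinuousLinearMap.mul_apply'] at this
    rw [this]
    exact tsum_congr fun k => by rw [mul_smul_comm, pow_succ']
  rw [h1, h2]

end Algebra

/-- The scalar function ψ. -/
def psiC (z : ℂ) : ℂ := ∑' k : ℕ, c (k + 1) • z ^ k

lemma psiC_ne_zero {z : ℂ} (hz : z ∈ Sigma1) : psiC z ≠ 0 := by
  by_cases h0 : z = 0
  · subst h0
    have h : psiC 0 = c 1 := by
      rw [psiC, tsum_eq_single 0 (fun k hk => by simp [zero_pow hk])]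
      simp
    rw [h]
    simpa [c] using twoPiI_ne_zero
  · intro hpsi
    have hmul := psi_mul (𝔸 := ℂ) z
    rw [show (∑' k : ℕ, c (k + 1) • z ^ k) = psiC z from rfl, hpsi, zero_mul] at hmul
    have hexp : Complex.exp (twoPiI * z) = 1 := by
      have : NormedSpace.exp (twoPiI • z) = 1 := by
        have := hmul.symm
        rwa [sub_eq_zero] at this
      rw [Complex.exp_eq_exp_ℂ]
      simpa [smul_eq_mul] using this
    rw [Complex.exp_eq_one_iff] at hexp
    obtain ⟨n, hn⟩ := hexp
    have hzn : z = (n : ℂ) := by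
      have h2 : twoPiI * z = twoPiI * (n : ℂ) := by
        rw [hn, twoPiI]; ring
      exact mul_left_cancel₀ twoPiI_ne_zero h2
    subst hzn
    obtain ⟨h1, h2, h3, h4⟩ := hz
    have hre : ((n : ℂ) - 1).re = (n : ℝ) - 1 := by simp
    have him : ((n : ℂ) - 1).im = 0 := by simp
    rw [hre] at h1 h2 h3 h4
    have hn0 : n ≠ 0 := by
      intro h; apply h0; rw [h]; simp
    have hn1 : (0 : ℝ) ≤ (n : ℝ) := by linarith
    have hn2 : (n : ℝ) ≤ 1 := by linarith
    have : n = 1 := by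
      have l1 : (0 : ℤ) ≤ n := by exact_mod_cast hn1
      have l2 : n ≤ (1 : ℤ) := by exact_mod_cast hn2
      omega
    subst this
    have := h4 (by norm_num)
    rw [him] at this
    exact lt_irrefl 0 this

end PsiProofAux

open PsiProofAux

section Main

variable {V : Type*} [NormedAddCommGroup V] [NormedSpace ℂ V] [FiniteDimensional ℂ V]

lemma psiEnd_eq_psi [Nontrivial V] (s : V →L[ℂ] V) :
    psiEnd s = ∑' k : ℕ, c (k + 1) • s ^ k := rfl

lemma psiEnd_apply_eigen [Nontrivial V] (s : V →L[ℂ] V) {lam : ℂ} {v : V}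
    (hv : s v = lam • v) : psiEnd s v = psiC lam • v := by
  have hpow : ∀ k : ℕ, (s ^ k) v = lam ^ k • v := by
    intro k
    induction k with
    | zero => simp
    | succ k ih =>
      rw [pow_succ, ContinuousLinearMap.mul_apply, hv, map_smul, ih, smul_smul, pow_succ]
      ring_nf
  have hsum := summable_shift (𝔸 := V →L[ℂ] V) s
  have happ := ContinuousLinearMap.map_tsum
    (ContinuousLinearMap.apply ℂ V v) hsum
  rw [psiEnd_eq_psi]
  calc (∑' k : ℕ, c (k + 1) • s ^ k) v
      = ∑' k : ℕ, (c (k + 1) • s ^ k) v := happ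
    _ = ∑' k : ℕ, (c (k + 1) * lam ^ k) • v := by
        refine tsum_congr fun k => ?_
        rw [ContinuousLinearMap.smul_apply, hpow, smul_smul]
    _ = (∑' k : ℕ, c (k + 1) * lam ^ k) • v := by
        refine Summable.tsum_smul_const ?_ v
        simpa [smul_eq_mul] using summable_shift (𝔸 := ℂ) lam
    _ = psiC lam • v := by
        rw [psiC]
        norm_num [smul_eq_mul]

lemma isUnit_psiEnd [Nontrivial V] (s : V →L[ℂ] V) (hs : spectrum ℂ s ⊆ Sigma1) :
    IsUnit (psiEnd s) := by
  rw [ContinuousLinearMap.isUnit_iff_bijective]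
  have hinj : Function.Injective (psiEnd s) := by
    by_contra hninj
    rw [Function.not_injective_iff] at hninj
    obtain ⟨a, b, hab, hne⟩ := hninj
    set K : Submodule ℂ V := LinearMap.ker (psiEnd s : V →ₗ[ℂ] V) with hK
    have hvK : a - b ∈ K := by
      simp only [hK, LinearMap.mem_ker, ContinuousLinearMap.coe_coe]
      rw [map_sub, hab, sub_self]
    have hvne : a - b ≠ 0 := sub_ne_zero.mpr hne
    have hKst : ∀ x ∈ K, s x ∈ K := by
      intro x hx
      simp only [hK, LinearMap.mem_ker, ContinuousLinearMap.coe_coe] at hx ⊢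
      have hcomm : s * psiEnd s = psiEnd s * s := by
        rw [psiEnd_eq_psi]
        exact mul_psi s
      have h1 : (psiEnd s * s) x = psiEnd s (s x) := rfl
      rw [← h1, ← hcomm, ContinuousLinearMap.mul_apply, hx, map_zero]
    haveI : Nontrivial K := ⟨⟨⟨a - b, hvK⟩, 0, by
      intro h
      exact hvne (by simpa using congrArg Subtype.val h)⟩⟩
    let s' : Module.End ℂ K := (s : V →ₗ[ℂ] V).restrict hKst
    obtain ⟨lam, hl⟩ := Module.End.exists_eigenvalue s'
    obtain ⟨x, hx⟩ := hl.exists_hasEigenvector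
    have hx_eig : s (x : V) = lam • (x : V) := by
      have := hx.apply_eq_smul
      exact congrArg Subtype.val this
    have hlam : lam ∈ spectrum ℂ s := by
      rw [spectrum.mem_iff]
      intro hU
      obtain ⟨g, hg⟩ := hU.exists_left_inv
      have hzero : (algebraMap ℂ (V →L[ℂ] V) lam - s) (x : V) = 0 := by
        rw [ContinuousLinearMap.sub_apply, hx_eig]
        simp [Algebra.algebraMap_eq_smul_one]
      have : (x : V) = 0 := by
        have h1 : (g * (algebraMap ℂ (V →L[ℂ] V) lam - s)) (x : V) = (x : V) := by
          rw [hg]; rfl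
        rw [ContinuousLinearMap.mul_apply, hzero, map_zero] at h1
        exact h1.symm
      exact hx.right (Subtype.ext this)
    have hker : psiEnd s (x : V) = 0 := x.2
    rw [psiEnd_apply_eigen s hx_eig] at hker
    rcases smul_eq_zero.mp hker with h | h
    · exact psiC_ne_zero (hs hlam) h
    · exact hx.right (Subtype.ext h)
  refine ⟨hinj, ?_⟩
  have := (LinearMap.injective_iff_surjective (f := (psiEnd s : V →ₗ[ℂ] V))).mp hinj
  exact this

end Main

/-- Let `w∘u + Id` be invertible, `s` the unique endomorphism with spectrum in Σ₁ and
`exp(2πi·s) = w∘u + Id`, and `x := ψ(s)⁻¹ ∘ w`. Then `ψ(x∘u) ∘ x = w`. -/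
theorem psi_x_comp_u_comp_x_eq_w
    {V W : Type*} [NormedAddCommGroup V] [NormedSpace ℂ V] [FiniteDimensional ℂ V]
    [NormedAddCommGroup W] [NormedSpace ℂ W] [FiniteDimensional ℂ W]
    (u : V →L[ℂ] W) (w : W →L[ℂ] V)
    (hinv : IsUnit (w.comp u + ContinuousLinearMap.id ℂ V))
    (s : V →L[ℂ] V) (hs : spectrum ℂ s ⊆ Sigma1)
    (hes : expEnd s = w.comp u + ContinuousLinearMap.id ℂ V) :
    (psiEnd (((Ring.inverse (psiEnd s)).comp w).comp u)).comp
      ((Ring.inverse (psiEnd s)).comp w) = w := by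
  by_cases hV : Subsingleton V
  · ext y
    exact Subsingleton.elim _ _
  haveI : Nontrivial V := not_subsingleton_iff_nontrivial.mp hV
  have hunit := isUnit_psiEnd s hs
  set p := psiEnd s with hp
  set q := Ring.inverse p with hq
  have hqp : q * p = 1 := Ring.inverse_mul_cancel p hunit
  have hpq : p * q = 1 := Ring.mul_inverse_cancel p hunit
  have hwu : w.comp u = p * s := by
    have hmul : p * s = expEnd s - 1 := by
      rw [hp, psiEnd_eq_psi]
      rw [expEnd]
      exact psi_mul (𝔸 := V →L[ℂ] V) s
    rw [hmul, hes]
    have hid : (ContinuousLinearMap.id ℂ V) = (1 : V →L[ℂ] V) := rfl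
    rw [hid, add_sub_cancel_right]
  have hx : (q.comp w).comp u = s := by
    rw [ContinuousLinearMap.comp_assoc, hwu]
    show q * (p * s) = s
    rw [← mul_assoc, hqp, one_mul]
  rw [hx]
  rw [← ContinuousLinearMap.comp_assoc]
  show (p * q).comp w = w
  rw [hpq]
  rfl
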